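/- Let V be a finite-dimensional real vector space, g a symmetric bilinear form on V, and u ∈ V with e := g u u ≠ 0. Suppose ρ ∈ ℝ, φ : V → ℝ is a linear functional with φ u = 0, s ∈ V with g u s = 0, and S : V →ₗ[ℝ] V satisfies S u = 0 and g u (S v) = 0 for all v. If ρ·(g u v)•u + (φ v)•u + (g u v)•s + S v = 0 for all v ∈ V, then ρ = 0, φ = 0, s = 0 and S = 0. Consequently the invariant decomposition of an endomorphism into rest mass density, conductive momentum, conductive energy flux and stress parts subject to these orthogonality constraints is unique. -/
import Mathlib


/-- Uniqueness of the invariant decomposition: if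
ρ·u⊗g(u) + u⊗φ + s⊗g(u) + S = 0 with φ u = 0, g u s = 0, S u = 0 and
the range of S g-orthogonal to u, then all the pieces vanish. -/
theorem decomposition_uniqueness
    (V : Type*) [AddCommGroup V] [Module ℝ V] [FiniteDimensional ℝ V]
    (g : V →ₗ[ℝ] V →ₗ[ℝ] ℝ) (hg : ∀ v w : V, g v w = g w v)
    (u : V) (he : g u u ≠ 0)
    (ρ : ℝ) (φ : V →ₗ[ℝ] ℝ) (hφ : φ u = 0)
    (s : V) (hs : g u s = 0)
    (S : V →ₗ[ℝ] V) (hSu : S u = 0) (hgS : ∀ v : V, g u (S v) = 0)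
    (h : ∀ v : V, (ρ * (g u v)) • u + (φ v) • u + (g u v) • s + S v = 0) :
    ρ = 0 ∧ φ = 0 ∧ s = 0 ∧ S = 0 := by
  have hu := h u
  rw [hφ, hSu] at hu
  -- apply g u to hu
  have h1 : ρ * g u u * g u u = 0 := by
    have := congrArg (g u) hu
    simpa [hs, mul_assoc] using this
  have hρ : ρ = 0 := by
    rcases mul_eq_zero.mp h1 with h2 | h2
    · exact (mul_eq_zero.mp h2).resolve_right he
    · exact absurd h2 he
  have hsz : s = 0 := by
    have : (g u u) • s = 0 := by
      have := hu
      rw [hρ] at this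
      simpa using this
    exact (smul_eq_zero.mp this).resolve_left he
  have hφv : ∀ v, φ v = 0 := by
    intro v
    have hv := h v
    rw [hρ, hsz] at hv
    simp only [zero_mul, zero_smul, smul_zero, zero_add, add_zero] at hv
    have := congrArg (g u) hv
    simp only [map_add, map_smul, hgS, smul_eq_mul, add_zero, map_zero] at this
    rcases mul_eq_zero.mp this with h2 | h2
    · exact h2
    · exact absurd h2 he
  have hSv : ∀ v, S v = 0 := by
    intro v
    have hv := h v
    rw [hρ, hsz, hφv] at hv
    simpa using hv
  exact ⟨hρ, LinearMap.ext hφv, hsz, LinearMap.ext hSv⟩
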